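/- Let k ≥ 2 be an integer and G a simple graph with β^k(G) > 0. Then for every subset U ⊆ V(G) such that G − U has more than one connected component, |U| ≥ β^k(G) · c(G − U), where c(G − U) is the number of components of G − U (i.e., the toughness of G is at least β^k(G)). -/

import Mathlib

open Finset
open scoped Classical

variable {V : Type*}

/-- The k-th neighborhood: vertices adjacent to at least `k` vertices of `S`. -/
noncomputable def kNbhd [Fintype V] (G : SimpleGraph V) (k : ℕ) (S : Finset V) : Finset V :=
  Finset.univ.filter fun v => k ≤ (S.filter fun u => G.Adj v u).card

/-- The k-th binding number. -/
noncomputable def bindingNum [Fintype V] (G : SimpleGraph V) (k : ℕ) : ℝ :=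
  if h : (Finset.univ.filter fun S : Finset V =>
      k ≤ S.card ∧ kNbhd G k S ≠ Finset.univ).Nonempty then
    (Finset.univ.filter fun S : Finset V =>
      k ≤ S.card ∧ kNbhd G k S ≠ Finset.univ).inf' h
      fun S => ((kNbhd G k S).card : ℝ) / (S.card : ℝ)
  else 0

lemma bindingNum_le [Fintype V] (G : SimpleGraph V) (k : ℕ) (S : Finset V)
    (h1 : k ≤ S.card) (h2 : kNbhd G k S ≠ Finset.univ) :
    bindingNum G k ≤ ((kNbhd G k S).card : ℝ) / (S.card : ℝ) := by
  have hmem : S ∈ (Finset.univ.filter fun S : Finset V =>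
      k ≤ S.card ∧ kNbhd G k S ≠ Finset.univ) := by
    simp [h1, h2]
  have hne : (Finset.univ.filter fun S : Finset V =>
      k ≤ S.card ∧ kNbhd G k S ≠ Finset.univ).Nonempty := ⟨S, hmem⟩
  rw [bindingNum, dif_pos hne]
  exact Finset.inf'_le _ hmem

theorem stmt_9 [Fintype V] (k : ℕ) (hk : 2 ≤ k) (G : SimpleGraph V)
    (hβ : 0 < bindingNum G k) :
    ∀ U : Finset V,
      1 < Nat.card (G.induce ((↑U : Set V)ᶜ)).ConnectedComponent →
      bindingNum G k * (Nat.card (G.induce ((↑U : Set V)ᶜ)).ConnectedComponent : ℝ) ≤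
        (U.card : ℝ) := by
  classical
  intro U hU
  set H := G.induce ((↑U : Set V)ᶜ) with hH
  set c := Nat.card H.ConnectedComponent with hc
  letI : Fintype H.ConnectedComponent := Fintype.ofFinite _
  -- membership translation
  have memW : ∀ v : V, v ∉ U → v ∈ ((↑U : Set V)ᶜ) := by
    intro v hv; simpa using hv
  -- representative map
  set r : H.ConnectedComponent → V := fun x => (x.out : V) with hr
  have hrU : ∀ x, r x ∉ U := by
    intro x
    have h2 := (Quot.out x).2
    simp only [Set.mem_compl_iff, Finset.mem_coe] at h2
    exact h2
  have hrmk : ∀ x : H.ConnectedComponent, H.connectedComponentMk x.out = x :=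
    fun x => Quot.out_eq x
  have hrinj : Function.Injective r := by
    intro x y hxy
    have h2 : (Quot.out x : ((↑U : Set V)ᶜ : Set V)) = Quot.out y := Subtype.ext hxy
    rw [← hrmk x, ← hrmk y, h2]
  -- adjacency within different components is impossible
  have key : ∀ (v w : ((↑U : Set V)ᶜ : Set V)), G.Adj ↑v ↑w →
      H.connectedComponentMk v = H.connectedComponentMk w := by
    intro v w h
    exact SimpleGraph.ConnectedComponent.sound (SimpleGraph.Adj.reachable (by exact h))
  have hcpos : 0 < c := lt_trans one_pos hU
  by_cases hkc : k ≤ c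
  · -- S = one representative from each component
    set S : Finset V := Finset.univ.image r with hS
    have hScard : S.card = c := by
      rw [hS, Finset.card_image_of_injective _ hrinj, Finset.card_univ, hc,
        Nat.card_eq_fintype_card]
    have hsub : kNbhd G k S ⊆ U := by
      intro v hv
      by_contra hvU
      rw [kNbhd, Finset.mem_filter] at hv
      have hcard : k ≤ (S.filter fun u => G.Adj v u).card := hv.2
      have hsubs : (S.filter fun u => G.Adj v u) ⊆
          {r (H.connectedComponentMk ⟨v, memW v hvU⟩)} := by
        intro s hs
        rw [Finset.mem_filter] at hs
        obtain ⟨hsS, hadj⟩ := hs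
        rw [hS, Finset.mem_image] at hsS
        obtain ⟨x, _, hx⟩ := hsS
        have hkey := key ⟨v, memW v hvU⟩ (Quot.out x) (by rw [← hx] at hadj; exact hadj)
        rw [hrmk] at hkey
        rw [Finset.mem_singleton, hkey]
        exact hx.symm
      have := Finset.card_le_card hsubs
      simp only [Finset.card_singleton] at this
      omega
    have hSne : kNbhd G k S ≠ Finset.univ := by
      intro hcon
      obtain ⟨x⟩ : Nonempty H.ConnectedComponent := Nat.card_pos_iff.mp hcpos |>.1
      exact hrU x (hsub (hcon ▸ Finset.mem_univ (r x)))
    have hble := bindingNum_le G k S (by omega) hSne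
    rw [hScard] at hble
    have hcard_le : ((kNbhd G k S).card : ℝ) ≤ (U.card : ℝ) := by
      exact_mod_cast Finset.card_le_card hsub
    have hble2 : bindingNum G k ≤ (U.card : ℝ) / (c : ℝ) :=
      le_trans hble (by gcongr)
    have hcR : (0:ℝ) < (c:ℝ) := by exact_mod_cast hcpos
    calc bindingNum G k * (c : ℝ) ≤ ((U.card : ℝ) / (c : ℝ)) * (c : ℝ) := by
          exact mul_le_mul_of_nonneg_right hble2 (le_of_lt hcR)
      _ = (U.card : ℝ) := div_mul_cancel₀ _ (ne_of_gt hcR)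
  · -- c < k. First, |V| ≥ k.
    have hn : k ≤ Fintype.card V := by
      by_contra hcon
      have hempty : ¬ (Finset.univ.filter fun S : Finset V =>
          k ≤ S.card ∧ kNbhd G k S ≠ Finset.univ).Nonempty := by
        rintro ⟨S, hS⟩
        rw [Finset.mem_filter] at hS
        have := Finset.card_le_univ S
        omega
      rw [bindingNum, dif_neg hempty] at hβ
      exact lt_irrefl _ hβ
    -- two distinct components
    have : Nontrivial H.ConnectedComponent := by
      rw [← Finite.one_lt_card_iff_nontrivial]; exact hU
    obtain ⟨x, y, hxy⟩ := this
    have hw12 : r x ≠ r y := fun h => hxy (hrinj h)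
    have hpair : ({r x, r y} : Finset V).card = 2 := Finset.card_pair hw12
    obtain ⟨S, hSsub1, _, hScard⟩ := Finset.exists_subsuperset_card_eq
      (Finset.subset_univ ({r x, r y} : Finset V)) (le_trans (le_of_eq hpair) hk)
      (by rw [Finset.card_univ]; exact hn)
    have hsub : kNbhd G k S ⊆ U := by
      intro v hv
      by_contra hvU
      rw [kNbhd, Finset.mem_filter] at hv
      have hcard : k ≤ (S.filter fun u => G.Adj v u).card := hv.2
      have hfsub : (S.filter fun u => G.Adj v u) ⊆ S := Finset.filter_subset _ _
      have heq : (S.filter fun u => G.Adj v u) = S :=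
        Finset.eq_of_subset_of_card_le hfsub (by omega)
      have hadjall : ∀ u ∈ S, G.Adj v u := by
        intro u hu
        rw [← heq] at hu
        exact (Finset.mem_filter.mp hu).2
      have hadjx : G.Adj v (r x) := hadjall _ (hSsub1 (by simp))
      have hadjy : G.Adj v (r y) := hadjall _ (hSsub1 (by simp))
      have hkx := key ⟨v, memW v hvU⟩ (Quot.out x) hadjx
      have hky := key ⟨v, memW v hvU⟩ (Quot.out y) hadjy
      rw [hrmk] at hkx hky
      exact hxy (hkx ▸ hky)
    have hSne : kNbhd G k S ≠ Finset.univ := by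
      intro hcon
      exact hrU x (hsub (hcon ▸ Finset.mem_univ (r x)))
    have hble := bindingNum_le G k S (by omega) hSne
    rw [hScard] at hble
    have hcard_le : ((kNbhd G k S).card : ℝ) ≤ (U.card : ℝ) := by
      exact_mod_cast Finset.card_le_card hsub
    have hkR : (0:ℝ) < (k:ℝ) := by exact_mod_cast (by omega : 0 < k)
    have hble2 : bindingNum G k ≤ (U.card : ℝ) / (k : ℝ) :=
      le_trans hble (by gcongr)
    have hck : (c : ℝ) ≤ (k : ℝ) := by exact_mod_cast (le_of_not_ge hkc)
    calc bindingNum G k * (c : ℝ) ≤ bindingNum G k * (k : ℝ) :=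
          mul_le_mul_of_nonneg_left hck (le_of_lt hβ)
      _ ≤ ((U.card : ℝ) / (k : ℝ)) * (k : ℝ) :=
          mul_le_mul_of_nonneg_right hble2 (le_of_lt hkR)
      _ = (U.card : ℝ) := div_mul_cancel₀ _ (ne_of_gt hkR)
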